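/- For t₁ < t₂, let α(t₁,t₂) = arg(R'(t₁)/(R(t₂)−R(t₁))) where R(t) = sin t + i·ξ(t), ξ(t) = ∫₀ᵗ sin²/√(1+sin²). Then the partial derivative of α with respect to t₁ equals |R'(t₁)|·(sin α / l + κ(t₁)), where l = |R(t₂) − R(t₁)| and κ(t) = 2 sin t. -/

import Mathlib

open Real Complex

noncomputable def xi (t : ℝ) : ℝ :=
  ∫ τ in (0:ℝ)..t, Real.sin τ ^ 2 / Real.sqrt (1 + Real.sin τ ^ 2)

noncomputable def R (t : ℝ) : ℂ := (Real.sin t : ℂ) + Complex.I * (xi t : ℂ)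

/-- Initial chord angle of `R` on `[t₁, t₂]`. -/
noncomputable def alphaAng (t₁ t₂ : ℝ) : ℝ := Complex.arg (deriv R t₁ / (R t₂ - R t₁))

/-! ### Auxiliary definitions and lemmas -/

noncomputable def xiD (t : ℝ) : ℝ := Real.sin t ^ 2 / Real.sqrt (1 + Real.sin t ^ 2)

noncomputable def xiDD (t : ℝ) : ℝ :=
  Real.sin t * Real.cos t * (2 + Real.sin t ^ 2) /
    ((1 + Real.sin t ^ 2) * Real.sqrt (1 + Real.sin t ^ 2))

noncomputable def R1 (t : ℝ) : ℂ := (Real.cos t : ℂ) + Complex.I * (xiD t : ℂ)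

noncomputable def R2 (t : ℝ) : ℂ := (-Real.sin t : ℂ) + Complex.I * (xiDD t : ℂ)

lemma one_add_sin_sq_pos (t : ℝ) : 0 < 1 + Real.sin t ^ 2 := by positivity

lemma sqrt_one_add_sin_sq_pos (t : ℝ) : 0 < Real.sqrt (1 + Real.sin t ^ 2) :=
  Real.sqrt_pos.2 (one_add_sin_sq_pos t)

lemma continuous_xiD : Continuous xiD := by
  apply Continuous.div (by continuity) (by continuity)
  exact fun t => (sqrt_one_add_sin_sq_pos t).ne'

lemma hasDerivAt_xi (t : ℝ) : HasDerivAt xi (xiD t) t := by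
  refine intervalIntegral.integral_hasDerivAt_right
    (continuous_xiD.intervalIntegrable _ _)
    (continuous_xiD.stronglyMeasurableAtFilter _ _)
    continuous_xiD.continuousAt

lemma hasDerivAt_xiD (t : ℝ) : HasDerivAt xiD (xiDD t) t := by
  have hq : (0:ℝ) < Real.sqrt (1 + Real.sin t ^ 2) := sqrt_one_add_sin_sq_pos t
  have hu : HasDerivAt (fun t => Real.sin t ^ 2) (2 * Real.sin t * Real.cos t) t := by
    exact ((Real.hasDerivAt_sin t).pow 2).congr_deriv (by simp)
  have hs : HasDerivAt (fun t => 1 + Real.sin t ^ 2) (2 * Real.sin t * Real.cos t) t := by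
    exact hu.const_add 1
  have hsq : HasDerivAt (fun t => Real.sqrt (1 + Real.sin t ^ 2))
      ((2 * Real.sin t * Real.cos t) / (2 * Real.sqrt (1 + Real.sin t ^ 2))) t := by
    exact hs.sqrt (one_add_sin_sq_pos t).ne'
  have hdiv := hu.div hsq hq.ne'
  refine hdiv.congr_deriv ?_
  have hq2 : Real.sqrt (1 + Real.sin t ^ 2) ^ 2 = 1 + Real.sin t ^ 2 :=
    Real.sq_sqrt (one_add_sin_sq_pos t).le
  rw [xiDD]
  field_simp
  linear_combination (Real.sin t ^ 3 * Real.cos t) * hq2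

lemma hasDerivAt_R (t : ℝ) : HasDerivAt R (R1 t) t := by
  have h1 := (Real.hasDerivAt_sin t).ofReal_comp
  have h2 := ((hasDerivAt_xi t).ofReal_comp).const_mul Complex.I
  exact h1.add h2

lemma deriv_R_eq : deriv R = R1 := funext fun t => (hasDerivAt_R t).deriv

lemma hasDerivAt_R1 (t : ℝ) : HasDerivAt R1 (R2 t) t := by
  have h1 := (Real.hasDerivAt_cos t).ofReal_comp
  have h2 := ((hasDerivAt_xiD t).ofReal_comp).const_mul Complex.I
  unfold R1 R2
  refine (h1.add h2).congr_deriv ?_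
  push_cast
  ring

lemma R1_re (t : ℝ) : (R1 t).re = Real.cos t := by simp [R1, -Complex.ofReal_cos]
lemma R1_im (t : ℝ) : (R1 t).im = xiD t := by simp [R1, -Complex.ofReal_cos]
lemma R2_re (t : ℝ) : (R2 t).re = -Real.sin t := by simp [R2, -Complex.ofReal_sin]
lemma R2_im (t : ℝ) : (R2 t).im = xiDD t := by simp [R2, -Complex.ofReal_sin]

lemma R1_ne_zero (t : ℝ) : R1 t ≠ 0 := by
  intro h0
  have hre : Real.cos t = 0 := by rw [← R1_re t, h0]; simp
  have him : xiD t = 0 := by rw [← R1_im t, h0]; simp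
  have hs : Real.sin t = 0 := by
    have := (div_eq_zero_iff.1 him).resolve_right (sqrt_one_add_sin_sq_pos t).ne'
    exact pow_eq_zero_iff (n := 2) (by norm_num) |>.1 this
  nlinarith [Real.sin_sq_add_cos_sq t]

lemma normSq_R1 (t : ℝ) : Complex.normSq (R1 t) = 1 / (1 + Real.sin t ^ 2) := by
  have hq2 : Real.sqrt (1 + Real.sin t ^ 2) ^ 2 = 1 + Real.sin t ^ 2 :=
    Real.sq_sqrt (one_add_sin_sq_pos t).le
  have hq : (0:ℝ) < Real.sqrt (1 + Real.sin t ^ 2) := sqrt_one_add_sin_sq_pos t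
  rw [Complex.normSq_apply, R1_re, R1_im, xiD]
  have hpyth := Real.sin_sq_add_cos_sq t
  field_simp
  rw [hq2]; linear_combination (1 + Real.sin t ^ 2) ^ 2 * hpyth

lemma abs_R1 (t : ℝ) : ‖R1 t‖ = 1 / Real.sqrt (1 + Real.sin t ^ 2) := by
  rw [Complex.norm_def, normSq_R1, one_div, Real.sqrt_inv, one_div]


lemma xiD_nonneg (t : ℝ) : 0 ≤ xiD t :=
  div_nonneg (sq_nonneg _) (Real.sqrt_nonneg _)

lemma key_im (t : ℝ) : (R2 t / R1 t).im = ‖R1 t‖ * (2 * Real.sin t) := by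
  rw [Complex.div_im, normSq_R1, R2_im, R2_re, R1_re, R1_im, xiD, xiDD, abs_R1]
  have hq2 : Real.sqrt (1 + Real.sin t ^ 2) ^ 2 = 1 + Real.sin t ^ 2 :=
    Real.sq_sqrt (one_add_sin_sq_pos t).le
  have hq : (0:ℝ) < Real.sqrt (1 + Real.sin t ^ 2) := sqrt_one_add_sin_sq_pos t
  have hpyth := Real.sin_sq_add_cos_sq t
  field_simp
  linear_combination (Real.sin t * (2 + Real.sin t ^ 2)) * hpyth

theorem alpha_partial_t1 (t₁ t₂ : ℝ) (h : t₁ < t₂) :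
    deriv (fun s => alphaAng s t₂) t₁ =
      ‖deriv R t₁‖ *
        (Real.sin (alphaAng t₁ t₂) / ‖R t₂ - R t₁‖ + 2 * Real.sin t₁) := by
  set a := R1 t₁ with ha_def
  set b := R t₂ - R t₁ with hb_def
  -- positivity of the imaginary part of the chord
  have hxi_lt : xi t₁ < xi t₂ := by
    have hint : xi t₂ - xi t₁ = ∫ τ in t₁..t₂, xiD τ :=
      (intervalIntegral.integral_interval_sub_left
        (continuous_xiD.intervalIntegrable _ _) (continuous_xiD.intervalIntegrable _ _))
    have hex : ∃ c ∈ Set.Icc t₁ t₂, 0 < xiD c := by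
      by_cases hs1 : Real.sin t₁ = 0
      · have hδ : 0 < min (t₂ - t₁) π := lt_min (by linarith) Real.pi_pos
        have hπ : min (t₂ - t₁) π ≤ π := min_le_right _ _
        have hd : min (t₂ - t₁) π ≤ t₂ - t₁ := min_le_left _ _
        refine ⟨t₁ + min (t₂ - t₁) π / 2, ⟨by linarith, by linarith⟩, ?_⟩
        have hsin : Real.sin (t₁ + min (t₂ - t₁) π / 2) =
            Real.cos t₁ * Real.sin (min (t₂ - t₁) π / 2) := by
          rw [Real.sin_add, hs1]; ring
        have hc0 : Real.cos t₁ ≠ 0 := by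
          intro h0; nlinarith [Real.sin_sq_add_cos_sq t₁]
        have hne : Real.sin (t₁ + min (t₂ - t₁) π / 2) ≠ 0 := by
          rw [hsin]
          exact mul_ne_zero hc0
            (Real.sin_pos_of_pos_of_lt_pi (by linarith) (by linarith [Real.pi_pos])).ne'
        rw [xiD]
        positivity
      · exact ⟨t₁, ⟨le_refl _, h.le⟩, by rw [xiD]; positivity⟩
    have hpos : 0 < ∫ τ in t₁..t₂, xiD τ :=
      intervalIntegral.integral_pos h (continuous_xiD.continuousOn)
        (fun x _ => xiD_nonneg x) hex
    linarith [hint ▸ hpos]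
  have hbim : 0 < b.im := by
    have hb' : b.im = xi t₂ - xi t₁ := by
      rw [hb_def]; simp [R]
    rw [hb']; linarith
  have hb0 : b ≠ 0 := by
    intro h0; rw [h0] at hbim; simp at hbim
  have ha0 : a ≠ 0 := R1_ne_zero t₁
  have haim : 0 ≤ a.im := by rw [ha_def, R1_im]; exact xiD_nonneg t₁
  -- the argument is taken in the slit plane
  have hslit : a / b ∈ Complex.slitPlane := by
    rw [Complex.mem_slitPlane_iff]
    by_cases him : (a / b).im = 0
    · left
      have hfne : a / b ≠ 0 := div_ne_zero ha0 hb0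
      have key : a.im = (a / b).re * b.im := by
        have h1 : (a / b) * b = a := div_mul_cancel₀ a hb0
        have h2 := congrArg Complex.im h1
        rw [Complex.mul_im, him] at h2
        linarith [h2]
      have hre_ne : (a / b).re ≠ 0 := fun h0 => hfne (Complex.ext h0 him)
      have hre_nonneg : 0 ≤ (a / b).re := by nlinarith [key, haim, hbim]
      exact lt_of_le_of_ne hre_nonneg (Ne.symm hre_ne)
    · right; exact him
  -- derivative computation
  set fd : ℂ := (R2 t₁ * b - a * -a) / b ^ 2 with hfd_def
  have hden : HasDerivAt (fun s => R t₂ - R s) (-(R1 t₁)) t₁ :=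
    (hasDerivAt_R t₁).const_sub (R t₂)
  have hf : HasDerivAt (fun s => R1 s / (R t₂ - R s)) fd t₁ :=
    (hasDerivAt_R1 t₁).div hden hb0
  have hlog : HasDerivAt (fun s => Complex.log (R1 s / (R t₂ - R s))) ((a / b)⁻¹ * fd) t₁ := by
    have := HasDerivAt.comp t₁ (Complex.hasDerivAt_log hslit) hf
    exact this
  have hIm : HasDerivAt (fun s => (Complex.log (R1 s / (R t₂ - R s))).im)
      (((a / b)⁻¹ * fd).im) t₁ := by
    have := Complex.imCLM.hasFDerivAt.comp_hasDerivAt t₁ hlog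
    exact this
  have hfun : (fun s => alphaAng s t₂) = fun s => (Complex.log (R1 s / (R t₂ - R s))).im := by
    funext s
    rw [alphaAng, deriv_R_eq, Complex.log_im]
  rw [hfun, hIm.deriv]
  -- simplify the derivative value
  have hzeq : (a / b)⁻¹ * fd = R2 t₁ / a + a / b := by
    rw [hfd_def]
    field_simp
    ring
  rw [hzeq, Complex.add_im]
  -- simplify the right-hand side
  have hα : alphaAng t₁ t₂ = Complex.arg (a / b) := by
    rw [alphaAng, deriv_R_eq]
  rw [hα, deriv_R_eq, ← ha_def, Complex.sin_arg, norm_div]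
  have habs_a : ‖a‖ ≠ 0 := by simpa using ha0
  have habs_b : ‖b‖ ≠ 0 := by simpa using hb0
  have h1 : ‖a‖ * ((a / b).im / (‖a‖ / ‖b‖) / ‖b‖
      + 2 * Real.sin t₁) = (a / b).im + ‖a‖ * (2 * Real.sin t₁) := by
    field_simp
  rw [h1]
  have h2 := key_im t₁
  rw [← ha_def] at h2
  linarith [h2]
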